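/- If μ = rc/(κ+c) and r > 0, then H is strictly decreasing on (0, κ+c) and on (κ+c, ∞), and z = κ+c is its unique root (and an inflection/stationary point with H'(κ+c)=0). -/

import Mathlib

open Real Set

theorem stmt_8 (μ σ r lam κ c : ℝ) (hσ : 0 < σ) (hlam : 0 < lam) (hκ : 0 < κ) (hc : 0 ≤ c)
    (hlr : max μ 0 < lam + r)
    (ν : ℝ) (hν : ν = μ / σ ^ 2 - 1 / 2)
    (φ ψ F G s' H : ℝ → ℝ) (w : ℝ)
    (hφ : ∀ x : ℝ, φ x = x ^ (-Real.sqrt (ν ^ 2 + 2 * (lam + r) / σ ^ 2) - ν))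
    (hψ : ∀ x : ℝ, ψ x = x ^ (Real.sqrt (ν ^ 2 + 2 * (lam + r) / σ ^ 2) - ν))
    (hF : ∀ z : ℝ, F z = ((r - μ) / (lam + r - μ)) * z - r * κ / (lam + r))
    (hG : ∀ z : ℝ, G z = φ (κ + c) * ψ z - φ z * ψ (κ + c))
    (hw : w = 2 * Real.sqrt (ν ^ 2 + 2 * (lam + r) / σ ^ 2))
    (hs : ∀ z : ℝ, s' z = z ^ (-2 * ν - 1))
    (hH : ∀ z : ℝ, H z = (deriv F z * G z - F z * deriv G z) / (w * s' z) + F (κ + c))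
    (hr : 0 < r) (hμ : μ = r * c / (κ + c)) :
    StrictAntiOn H (Set.Ioo (0 : ℝ) (κ + c)) ∧
    StrictAntiOn H (Set.Ioi (κ + c)) ∧
    H (κ + c) = 0 ∧
    (∀ z ∈ Set.Ioi (0 : ℝ), H z = 0 → z = κ + c) ∧
    deriv H (κ + c) = 0 := by
  have hk : (0:ℝ) < κ + c := by linarith
  set k := κ + c with hkdef
  have hσ2 : (0:ℝ) < σ ^ 2 := by positivity
  have hlr0 : 0 < lam + r := by linarith
  have hlrμ : 0 < lam + r - μ := by
    have := le_max_left μ (0:ℝ); linarith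
  have hpos : 0 < ν ^ 2 + 2 * (lam + r) / σ ^ 2 := by
    have h2 : 0 < 2 * (lam + r) / σ ^ 2 := div_pos (by linarith) hσ2
    nlinarith [sq_nonneg ν]
  set a := Real.sqrt (ν ^ 2 + 2 * (lam + r) / σ ^ 2) with hadef
  have ha : 0 < a := Real.sqrt_pos.mpr hpos
  have ha2 : a ^ 2 = ν ^ 2 + 2 * (lam + r) / σ ^ 2 := Real.sq_sqrt hpos.le
  set p := a - ν with hpdef
  set q := -a - ν with hqdef
  set A := (r - μ) / (lam + r - μ) with hAdef
  set B := r * κ / (lam + r) with hBdef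
  clear_value k a p q A B
  have hwpq : w = p - q := by rw [hw, hpdef, hqdef]; ring
  have hw0 : (0:ℝ) < w := by rw [hwpq, hpdef, hqdef]; linarith
  have hpq : p * q = -(2 * (lam + r) / σ ^ 2) := by
    have h : p * q = ν ^ 2 - a ^ 2 := by rw [hpdef, hqdef]; ring
    rw [h, ha2]; ring
  have hpqs : p + q = -(2 * ν) := by rw [hpdef, hqdef]; ring
  have hq_lt_p : q < p := by rw [hpdef, hqdef]; linarith
  -- scalar auxiliary identities
  have haux1 : σ ^ 2 * (A * (1 + 2 * ν + p * q)) = -(2 * (r - μ)) := by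
    rw [hpq, hAdef, hν]
    field_simp
    ring
  have haux2 : σ ^ 2 * (p * q * B) = -(2 * r * κ) := by
    rw [hpq, hBdef]
    field_simp
  have haux3 : (r - μ) * k = r * κ := by
    rw [hμ, hkdef]
    field_simp
    ring
  have key : ∀ z : ℝ, σ ^ 2 * k * (A * ((1 - p) * (1 - q)) * z - p * q * B)
      = 2 * r * κ * (k - z) := by
    intro z
    have h1 : (1 - p) * (1 - q) = 1 + 2 * ν + p * q := by linear_combination -hpqs
    linear_combination (σ ^ 2 * k * A * z) * h1 + (k * z) * haux1 - k * haux2 - (2 * z) * haux3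
  -- closed form for H on (0, ∞)
  have hHval : ∀ z : ℝ, 0 < z →
      H z = (k ^ q * z ^ (-q) * (A * (1 - p) * z + B * p)
            - k ^ p * z ^ (-p) * (A * (1 - q) * z + B * q)) / w + (A * k - B) := by
    intro z hz
    have hzne : z ≠ 0 := hz.ne'
    have hdF : deriv F z = A := by
      have hFfun : F = fun x => A * x - B := funext fun x => hF x
      rw [hFfun]
      simpa using (((hasDerivAt_id z).const_mul A).sub_const B).deriv
    have hGz : ∀ x : ℝ, G x = k ^ q * x ^ p - x ^ q * k ^ p := by
      intro x; rw [hG x, hφ, hψ, hφ, hψ]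
    have hdG : deriv G z = k ^ q * (p * z ^ (p - 1)) - q * z ^ (q - 1) * k ^ p := by
      have hGfun : G = fun x : ℝ => k ^ q * x ^ p - x ^ q * k ^ p := funext hGz
      rw [hGfun]
      have h1 := (Real.hasDerivAt_rpow_const (x := z) (p := p) (Or.inl hzne)).const_mul (k ^ q)
      have h2 := (Real.hasDerivAt_rpow_const (x := z) (p := q) (Or.inl hzne)).mul_const (k ^ p)
      exact (h1.sub h2).deriv
    rw [hH z, hdF, hdG, hGz z, hF z, hF k, hs z]
    have hm : z ^ (-2 * ν - 1) ≠ 0 := (Real.rpow_pos_of_pos hz _).ne'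
    have e1 : z ^ p = z ^ (p - 1) * z := by
      conv_lhs => rw [show p = (p - 1) + 1 by ring]
      rw [Real.rpow_add hz, Real.rpow_one]
    have e2 : z ^ q = z ^ (q - 1) * z := by
      conv_lhs => rw [show q = (q - 1) + 1 by ring]
      rw [Real.rpow_add hz, Real.rpow_one]
    have e3 : z ^ (-q) = z ^ (p - 1) / z ^ (-2 * ν - 1) := by
      rw [eq_div_iff hm, ← Real.rpow_add hz]
      congr 1
      linarith [hpqs]
    have e4 : z ^ (-p) = z ^ (q - 1) / z ^ (-2 * ν - 1) := by
      rw [eq_div_iff hm, ← Real.rpow_add hz]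
      congr 1
      linarith [hpqs]
    rw [e1, e2, e3, e4]
    field_simp
    ring
  -- derivative of H on (0, ∞)
  have hD : ∀ z : ℝ, 0 < z → HasDerivAt H
      (2 * r * κ / (σ ^ 2 * k * w) * ((k ^ q * z ^ (-q - 1) - k ^ p * z ^ (-p - 1)) * (k - z))) z := by
    intro z hz
    have hzne : z ≠ 0 := hz.ne'
    have e5 : z ^ (-q) = z ^ (-q - 1) * z := by
      conv_lhs => rw [show -q = (-q - 1) + 1 by ring]
      rw [Real.rpow_add hz, Real.rpow_one]
    have e6 : z ^ (-p) = z ^ (-p - 1) * z := by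
      conv_lhs => rw [show -p = (-p - 1) + 1 by ring]
      rw [Real.rpow_add hz, Real.rpow_one]
    have h1 : HasDerivAt (fun x : ℝ => (k ^ q * x ^ (-q) * (A * (1 - p) * x + B * p)
            - k ^ p * x ^ (-p) * (A * (1 - q) * x + B * q)) / w + (A * k - B))
        (((k ^ q * z ^ (-q - 1) - k ^ p * z ^ (-p - 1))
          * (A * ((1 - p) * (1 - q)) * z - p * q * B)) / w) z := by
      have u2 : HasDerivAt (fun x : ℝ => A * (1 - p) * x + B * p) (A * (1 - p)) z := by
        simpa using ((hasDerivAt_id z).const_mul (A * (1 - p))).add_const (B * p)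
      have u4 : HasDerivAt (fun x : ℝ => A * (1 - q) * x + B * q) (A * (1 - q)) z := by
        simpa using ((hasDerivAt_id z).const_mul (A * (1 - q))).add_const (B * q)
      have u1 := (Real.hasDerivAt_rpow_const (x := z) (p := -q) (Or.inl hzne)).const_mul (k ^ q)
      have u3 := (Real.hasDerivAt_rpow_const (x := z) (p := -p) (Or.inl hzne)).const_mul (k ^ p)
      have t := (((u1.mul u2).sub (u3.mul u4)).div_const w).add_const (A * k - B)
      convert t using 1
      · rfl
      · rfl
      · rfl
      rw [e5, e6]
      ring
    have hev : H =ᶠ[nhds z] (fun x : ℝ => (k ^ q * x ^ (-q) * (A * (1 - p) * x + B * p)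
            - k ^ p * x ^ (-p) * (A * (1 - q) * x + B * q)) / w + (A * k - B)) := by
      filter_upwards [isOpen_Ioi.mem_nhds (show z ∈ Ioi (0:ℝ) from hz)] with x hx
      exact hHval x hx
    have h2 := h1.congr_of_eventuallyEq hev
    convert h2 using 1
    · rfl
    · rfl
    have hσkw : (0:ℝ) < σ ^ 2 * k * w := mul_pos (mul_pos hσ2 hk) hw0
    rw [div_mul_eq_mul_div, div_eq_div_iff hσkw.ne' hw0.ne']
    linear_combination (-(k ^ q * z ^ (-q - 1) - k ^ p * z ^ (-p - 1)) * w) * key z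
  -- sign of the derivative
  have hsign : ∀ z : ℝ, 0 < z → z ≠ k →
      2 * r * κ / (σ ^ 2 * k * w) * ((k ^ q * z ^ (-q - 1) - k ^ p * z ^ (-p - 1)) * (k - z)) < 0 := by
    intro z hz hne
    have hC : 0 < 2 * r * κ / (σ ^ 2 * k * w) :=
      div_pos (mul_pos (mul_pos two_pos hr) hκ) (mul_pos (mul_pos hσ2 hk) hw0)
    have e5 : z ^ (-q - 1) = z ^ (-q) / z := by
      rw [show -q - 1 = -q + (-1) by ring, Real.rpow_add hz, Real.rpow_neg_one, div_eq_mul_inv]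
    have e6 : z ^ (-p - 1) = z ^ (-p) / z := by
      rw [show -p - 1 = -p + (-1) by ring, Real.rpow_add hz, Real.rpow_neg_one, div_eq_mul_inv]
    have h1 : (k / z) ^ q = k ^ q * z ^ (-q) := by
      rw [Real.div_rpow hk.le hz.le, Real.rpow_neg hz.le, div_eq_mul_inv]
    have h2 : (k / z) ^ p = k ^ p * z ^ (-p) := by
      rw [Real.div_rpow hk.le hz.le, Real.rpow_neg hz.le, div_eq_mul_inv]
    have hfac : k ^ q * z ^ (-q - 1) - k ^ p * z ^ (-p - 1) = ((k / z) ^ q - (k / z) ^ p) / z := by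
      rw [e5, e6, h1, h2]; ring
    rcases lt_or_gt_of_ne hne with hlt | hgt
    · have hb : 1 < k / z := (one_lt_div hz).mpr hlt
      have hlt2 : (k / z) ^ q < (k / z) ^ p := Real.rpow_lt_rpow_of_exponent_lt hb hq_lt_p
      have hfneg : k ^ q * z ^ (-q - 1) - k ^ p * z ^ (-p - 1) < 0 := by
        rw [hfac]; exact div_neg_of_neg_of_pos (by linarith) hz
      exact mul_neg_of_pos_of_neg hC (mul_neg_of_neg_of_pos hfneg (by linarith))
    · have hb0 : 0 < k / z := div_pos hk hz
      have hb1 : k / z < 1 := (div_lt_one hz).mpr hgt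
      have hlt2 : (k / z) ^ p < (k / z) ^ q := Real.rpow_lt_rpow_of_exponent_gt hb0 hb1 hq_lt_p
      have hfpos : 0 < k ^ q * z ^ (-q - 1) - k ^ p * z ^ (-p - 1) := by
        rw [hfac]; exact div_pos (by linarith) hz
      exact mul_neg_of_pos_of_neg hC (mul_neg_of_pos_of_neg hfpos (by linarith))
  -- H(k) = 0
  have hHk : H k = 0 := by
    rw [hHval k hk]
    have e1 : k ^ q * k ^ (-q) = 1 := by rw [← Real.rpow_add hk]; simp
    have e2 : k ^ p * k ^ (-p) = 1 := by rw [← Real.rpow_add hk]; simp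
    rw [e1, e2, hwpq]
    have hpq0 : p - q ≠ 0 := by rw [← hwpq]; exact hw0.ne'
    field_simp
    ring
  -- strict antitonicity
  have anti1 : StrictAntiOn H (Ioc 0 k) := by
    apply strictAntiOn_of_deriv_neg (convex_Ioc 0 k)
    · intro x hx
      exact ((hD x hx.1).differentiableAt.continuousAt).continuousWithinAt
    · intro x hx
      rw [interior_Ioc] at hx
      rw [(hD x hx.1).deriv]
      exact hsign x hx.1 (ne_of_lt hx.2)
  have anti2 : StrictAntiOn H (Ici k) := by
    apply strictAntiOn_of_deriv_neg (convex_Ici k)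
    · intro x hx
      have hx0 : 0 < x := lt_of_lt_of_le hk hx
      exact ((hD x hx0).differentiableAt.continuousAt).continuousWithinAt
    · intro x hx
      rw [interior_Ici] at hx
      have hx0 : 0 < x := lt_trans hk hx
      rw [(hD x hx0).deriv]
      exact hsign x hx0 (ne_of_gt hx)
  refine ⟨anti1.mono Ioo_subset_Ioc_self, anti2.mono Ioi_subset_Ici_self, hHk, ?_, ?_⟩
  · intro z hz hz0
    have hz' : 0 < z := hz
    by_contra hne
    rcases lt_or_gt_of_ne hne with h | h
    · have := anti1 ⟨hz', h.le⟩ ⟨hk, le_refl k⟩ h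
      rw [hHk, hz0] at this
      exact lt_irrefl 0 this
    · have := anti2 (mem_Ici.mpr (le_refl k)) (mem_Ici.mpr h.le) h
      rw [hHk, hz0] at this
      exact lt_irrefl 0 this
  · rw [(hD k hk).deriv]
    simp
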